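/- Let C be a generating set of the monoid wEnd P_n. Then C contains at least ⌊n/2⌋ distinct transformations α ∈ wEnd P_n \ End P_n with inv(α) = 0. -/

import Mathlib

/-- `α` is a weak endomorphism of the path `P_n` (with vertices `0,…,n-1` standing for
`1,…,n`): `|iα - (i+1)α| ≤ 1` for all consecutive pairs of vertices. -/
def IsWEndo {n : ℕ} (f : Function.End (Fin n)) : Prop :=
  ∀ i : ℕ, ∀ h : i + 1 < n,
    |(((f ⟨i, by omega⟩ : Fin n) : ℕ) : ℤ) - (((f ⟨i + 1, h⟩ : Fin n) : ℕ) : ℤ)| ≤ 1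

/-- `α` is an endomorphism of the path `P_n`: `|iα - (i+1)α| = 1` for all consecutive
pairs of vertices. -/
def IsEndo {n : ℕ} (f : Function.End (Fin n)) : Prop :=
  ∀ i : ℕ, ∀ h : i + 1 < n,
    |(((f ⟨i, by omega⟩ : Fin n) : ℕ) : ℤ) - (((f ⟨i + 1, h⟩ : Fin n) : ℕ) : ℤ)| = 1

/-- The set of inversions of `α`: indices `i ∈ {2,…,n-1}` (in `0`-indexed form
`i ∈ {1,…,n-2}`) with `(i-1)α = (i+1)α ≠ iα`. -/
def InvSet {n : ℕ} (f : Function.End (Fin n)) : Set ℕ :=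
  {i | ∃ (h1 : 1 ≤ i) (h2 : i + 1 < n),
    f ⟨i - 1, by omega⟩ = f ⟨i + 1, h2⟩ ∧ f ⟨i + 1, h2⟩ ≠ f ⟨i, by omega⟩}

namespace PathAux

variable {n : ℕ}

/-- Integer value of `f` at index `k` (junk `0` out of range). -/
def val (f : Function.End (Fin n)) (k : ℕ) : ℤ :=
  if hk : k < n then ((f ⟨k, hk⟩ : Fin n) : ℕ) else 0

lemma val_eq (f : Function.End (Fin n)) {k : ℕ} (hk : k < n) :
    val f k = ((f ⟨k, hk⟩ : Fin n) : ℕ) := dif_pos hk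

lemma val_nonneg (f : Function.End (Fin n)) {k : ℕ} (hk : k < n) : 0 ≤ val f k := by
  rw [val_eq f hk]; positivity

lemma val_lt (f : Function.End (Fin n)) {k : ℕ} (hk : k < n) : val f k < n := by
  rw [val_eq f hk]; exact_mod_cast (f ⟨k, hk⟩).isLt

lemma val_mul (g h : Function.End (Fin n)) {k : ℕ} (hk : k < n) :
    val (g * h) k = val g (val h k).toNat := by
  rw [val_eq _ hk, val_eq h hk, Int.toNat_natCast, val_eq g (h ⟨k, hk⟩).isLt]
  have : (g * h) ⟨k, hk⟩ = g ⟨((h ⟨k, hk⟩ : Fin n) : ℕ), (h ⟨k, hk⟩).isLt⟩ := by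
    show g (h ⟨k, hk⟩) = _
    rw [Fin.eta]
  rw [this]

lemma wendo_val {f : Function.End (Fin n)} (hf : IsWEndo f) {k : ℕ} (hk : k + 1 < n) :
    |val f k - val f (k + 1)| ≤ 1 := by
  rw [val_eq f (by omega), val_eq f hk]; exact hf k hk

lemma wendo_of_val {f : Function.End (Fin n)}
    (hf : ∀ k, k + 1 < n → |val f k - val f (k + 1)| ≤ 1) : IsWEndo f := by
  intro k hk
  have := hf k hk
  rwa [val_eq f (by omega), val_eq f hk] at this

lemma val_one {k : ℕ} (hk : k < n) : val (1 : Function.End (Fin n)) k = k := by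
  rw [val_eq _ hk]; rfl

lemma mul_wendo {g h : Function.End (Fin n)} (hg : IsWEndo g) (hh : IsWEndo h) :
    IsWEndo (g * h) := by
  apply wendo_of_val
  intro k hk
  rw [val_mul g h (by omega), val_mul g h hk]
  have h1 := wendo_val hh hk
  have ha := val_nonneg h (show k < n by omega)
  have hb := val_nonneg h hk
  have ha' := val_lt h (show k < n by omega)
  have hb' := val_lt h hk
  have : (val h k).toNat = (val h (k+1)).toNat ∨
      (val h k).toNat + 1 = (val h (k+1)).toNat ∨
      (val h (k+1)).toNat + 1 = (val h k).toNat := by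
    rw [abs_le] at h1; omega
  rcases this with he | he | he
  · rw [he]; simp
  · have := wendo_val hg (show (val h k).toNat + 1 < n by omega)
    rwa [← he]
  · have := wendo_val hg (show (val h (k+1)).toNat + 1 < n by omega)
    rw [← he]
    rwa [abs_sub_comm]
/-- Monotone weak endomorphisms with a single plateau at position `j` or `n-2-j`. -/
def Kcl (n j : ℕ) (f : Function.End (Fin n)) : Prop :=
  ∃ i : ℕ, (i = j ∨ i + j + 2 = n) ∧ i + 1 < n ∧ ∃ ε : ℤ, (ε = 1 ∨ ε = -1) ∧
    ∀ k, k < n → val f k = val f 0 + ε * ((k : ℤ) - if i < k then 1 else 0)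

lemma Kcl.isWEndo {j : ℕ} {f : Function.End (Fin n)} (hK : Kcl n j f) : IsWEndo f := by
  obtain ⟨i, _, hin, ε, hε, hfor⟩ := hK
  apply wendo_of_val
  intro k hk
  rw [hfor k (by omega), hfor (k + 1) hk]
  rw [abs_le]
  rcases hε with rfl | rfl <;> split_ifs <;> push_cast <;> omega

lemma Kcl.not_endo {j : ℕ} {f : Function.End (Fin n)} (hK : Kcl n j f) : ¬ IsEndo f := by
  obtain ⟨i, _, hin, ε, hε, hfor⟩ := hK
  intro hE
  have h2 : |val f i - val f (i + 1)| = 1 := by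
    rw [val_eq f (by omega : i < n), val_eq f hin]; exact hE i hin
  have e : val f (i + 1) = val f i := by
    rw [hfor i (by omega), hfor (i + 1) hin]
    rcases hε with rfl | rfl <;> split_ifs <;> push_cast <;> omega
  rw [e] at h2
  simp at h2

lemma Kcl.invset {j : ℕ} {f : Function.End (Fin n)} (hK : Kcl n j f) : InvSet f = ∅ := by
  obtain ⟨i, _, hin, ε, hε, hfor⟩ := hK
  ext m
  simp only [InvSet, Set.mem_setOf_eq, Set.mem_empty_iff_false, iff_false, not_exists]
  intro h1 h2 hcon
  have he : val f (m - 1) = val f (m + 1) := by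
    rw [val_eq f (by omega : m - 1 < n), val_eq f h2, hcon.1]
  rw [hfor (m - 1) (by omega), hfor (m + 1) h2] at he
  rcases hε with rfl | rfl <;> split_ifs at he <;> omega

lemma Kcl.j_unique {j j' : ℕ} {f : Function.End (Fin n)} (hj : j < n / 2) (hj' : j' < n / 2)
    (hK : Kcl n j f) (hK' : Kcl n j' f) : j = j' := by
  obtain ⟨i, hij, hin, ε, hε, hfor⟩ := hK
  obtain ⟨i', hij', hin', ε', hε', hfor'⟩ := hK'
  have hii : i = i' := by
    by_contra hne
    have e1 : val f (i + 1) = val f i := by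
      rw [hfor i (by omega), hfor (i + 1) hin]
      rcases hε with rfl | rfl <;> split_ifs <;> push_cast <;> omega
    rw [hfor' i (by omega), hfor' (i + 1) hin] at e1
    rcases hε' with rfl | rfl <;> split_ifs at e1 <;> omega
  subst hii
  rcases hij with rfl | hij <;> rcases hij' with h' | h' <;> omega

lemma Kcl.one_false {j : ℕ} (hK : Kcl n j (1 : Function.End (Fin n))) : False := by
  obtain ⟨i, _, hin, ε, hε, hfor⟩ := hK
  have e1 := hfor i (by omega)
  have e2 := hfor (i + 1) hin
  rw [val_one (by omega : i < n)] at e1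
  rw [val_one hin] at e2
  rcases hε with rfl | rfl <;> split_ifs at e1 e2 <;> omega

lemma key {j : ℕ} {g h : Function.End (Fin n)} (hg : IsWEndo g) (hh : IsWEndo h)
    (hK : Kcl n j (g * h)) : Kcl n j g ∨ Kcl n j h := by
  obtain ⟨i, hij, hin, ε, hε, hf⟩ := hK
  have hn : 2 ≤ n := by omega
  -- near-injectivity of h
  have step1 : ∀ a b : ℕ, a < b → b < n → val h a = val h b → a = i ∧ b = i + 1 := by
    intro a b hab hbn hve
    have hab2 : val (g * h) a = val (g * h) b := by
      rw [val_mul g h (show a < n by omega), val_mul g h hbn, hve]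
    rw [hf a (by omega), hf b hbn] at hab2
    rcases hε with rfl | rfl <;> split_ifs at hab2 <;> omega
  have hsh : ∀ k, k + 1 < n → |val h k - val h (k + 1)| ≤ 1 := fun k hk => wendo_val hh hk
  by_cases hplat : val h i = val h (i + 1)
  · -- CASE B : h itself lies in the class
    right
    by_cases hn3 : n < 3
    · -- n = 2, i = 0
      have hi0 : i = 0 := by omega
      subst hi0
      have hn2' : n = 2 := by omega
      subst hn2'
      norm_num at hplat
      refine ⟨0, hij, hin, 1, Or.inl rfl, ?_⟩
      intro k hk
      interval_cases k
      · rw [if_neg (lt_irrefl 0)]; omega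
      · rw [if_pos (by norm_num : (0:ℕ) < 1)]; omega
    · push_neg at hn3
      have hk0 : ∃ k0, k0 ≠ i ∧ k0 + 1 < n ∧ (k0 = 0 ∨ k0 = 1) := by
        by_cases h0 : i = 0
        · exact ⟨1, by omega, by omega, Or.inr rfl⟩
        · exact ⟨0, by omega, by omega, Or.inl rfl⟩
      obtain ⟨k0, hk0i, hk0n, -⟩ := hk0
      set d : ℤ := val h (k0 + 1) - val h k0 with hddef
      have stepd : ∀ k, k + 1 < n → k ≠ i →
          val h (k + 1) - val h k = 1 ∨ val h (k + 1) - val h k = -1 := by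
        intro k hk hki
        have h1 := hsh k hk
        have h2 : val h k ≠ val h (k + 1) := by
          intro he; exact hki (step1 k (k + 1) (by omega) hk he).1
        rw [abs_le] at h1; omega
      have gap : ∀ a b : ℕ, a < b → b < n → b ≠ a + 1 → val h a ≠ val h b := by
        intro a b hab hbn hne he
        have := step1 a b hab hbn he; omega
      have eqsteps : ∀ m k l : ℕ, l - k ≤ m → k ≤ l → l + 1 < n → k ≠ i → l ≠ i →
          val h (k + 1) - val h k = val h (l + 1) - val h l := by
        intro m
        induction m with
        | zero =>
          intro k l hm hkl _ _ _
          have : k = l := by omega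
          rw [this]
        | succ m ih =>
          intro k l hm hkl hln hki hli
          rcases eq_or_lt_of_le hkl with rfl | hkl'
          · rfl
          · by_cases hki1 : k + 1 = i
            · have hkl2 : k + 2 ≤ l := by omega
              have hplat' : val h (k + 1) = val h (k + 2) := by
                have : val h i = val h (i + 1) := hplat
                rw [← hki1] at this
                exact this
              have hstep : val h (k + 1) - val h k = val h (k + 2 + 1) - val h (k + 2) := by
                have hne : val h k ≠ val h (k + 2 + 1) :=
                  gap k (k + 2 + 1) (by omega) (by omega) (by omega)
                have s1 := stepd k (by omega) hki
                have s2 := stepd (k + 2) (by omega) (by omega)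
                omega
              rcases eq_or_lt_of_le hkl2 with heq | hlt
              · rw [← heq]; exact hstep
              · exact hstep.trans (ih (k + 2) l (by omega) (by omega) hln (by omega) hli)
            · have hstep : val h (k + 1) - val h k = val h (k + 1 + 1) - val h (k + 1) := by
                have hne : val h k ≠ val h (k + 1 + 1) :=
                  gap k (k + 1 + 1) (by omega) (by omega) (by omega)
                have s1 := stepd k (by omega) hki
                have s2 := stepd (k + 1) (by omega) hki1
                omega
              rcases eq_or_lt_of_le (show k + 1 ≤ l by omega) with heq | hlt
              · rw [← heq]; exact hstep
              · exact hstep.trans (ih (k + 1) l (by omega) (by omega) hln hki1 hli)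
      have hd : d = 1 ∨ d = -1 := stepd k0 hk0n hk0i
      have hsk : ∀ k, k + 1 < n → k ≠ i → val h (k + 1) = val h k + d := by
        intro k hk hki
        rcases le_total k0 k with hle | hle
        · have := eqsteps (k - k0) k0 k (by omega) hle hk hk0i hki
          omega
        · have := eqsteps (k0 - k) k k0 (by omega) hle hk0n hki hk0i
          omega
      have formula : ∀ k, k < n →
          val h k = val h 0 + d * ((k : ℤ) - if i < k then 1 else 0) := by
        intro k
        induction k with
        | zero => intro _; norm_num
        | succ k ih =>
          intro hk
          have ihh := ih (by omega)
          by_cases hki : k = i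
          · subst hki
            have e : val h (k + 1) = val h k := hplat.symm
            rw [e, ihh]
            rw [if_neg (lt_irrefl k), if_pos (Nat.lt_succ_self k)]
            push_cast
            ring
          · rw [hsk k hk hki, ihh]
            have hcond : (if i < k + 1 then (1 : ℤ) else 0) = if i < k then 1 else 0 := by
              split_ifs <;> omega
            rw [hcond]
            push_cast
            ring
      exact ⟨i, hij, hin, d, hd, formula⟩
  · -- CASE A : h is injective, hence id or the reflection
    have hinj : ∀ a b : ℕ, a < b → b < n → val h a ≠ val h b := by
      intro a b hab hbn he
      obtain ⟨h1, h2⟩ := step1 a b hab hbn he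
      subst h1; subst h2
      exact hplat he
    have stepd : ∀ k, k + 1 < n →
        val h (k + 1) - val h k = 1 ∨ val h (k + 1) - val h k = -1 := by
      intro k hk
      have h1 := hsh k hk
      have h2 := hinj k (k + 1) (by omega) hk
      rw [abs_le] at h1; omega
    have eqs : ∀ k, k + 1 < n → val h (k + 1) - val h k = val h 1 - val h 0 := by
      intro k
      induction k with
      | zero => intro _; rfl
      | succ k ih =>
        intro hk
        have e1 : val h (k + 1 + 1) - val h (k + 1) = val h (k + 1) - val h k := by
          have hne := hinj k (k + 1 + 1) (by omega) hk
          have s1 := stepd k (by omega)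
          have s2 := stepd (k + 1) hk
          omega
        rw [e1]; exact ih (by omega)
    have hd : val h 1 - val h 0 = 1 ∨ val h 1 - val h 0 = -1 := stepd 0 (by omega)
    rcases hd with hd | hd
    · -- h = identity
      have formula : ∀ k, k < n → val h k = val h 0 + k := by
        intro k
        induction k with
        | zero => intro _; norm_num
        | succ k ih =>
          intro hk
          have := eqs k hk
          have ihh := ih (by omega)
          push_cast
          omega
      have h00 : val h 0 = 0 := by
        have hb := val_lt h (show n - 1 < n by omega)
        have h2 := formula (n - 1) (by omega)
        have hb0 := val_nonneg h (show 0 < n by omega)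
        omega
      have hidk : ∀ k, k < n → (val h k).toNat = k := by
        intro k hk
        have := formula k hk
        omega
      left
      refine ⟨i, hij, hin, ε, hε, ?_⟩
      have hgk : ∀ k, k < n → val g k = val (g * h) k := by
        intro k hk
        rw [val_mul g h hk, hidk k hk]
      intro k hk
      rw [hgk k hk, hgk 0 (by omega)]
      exact hf k hk
    · -- h = reflection
      have formula : ∀ k, k < n → val h k = val h 0 - k := by
        intro k
        induction k with
        | zero => intro _; norm_num
        | succ k ih =>
          intro hk
          have := eqs k hk
          have ihh := ih (by omega)
          push_cast
          omega
      have h00 : val h 0 = (n : ℤ) - 1 := by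
        have hb := val_nonneg h (show n - 1 < n by omega)
        have h2 := formula (n - 1) (by omega)
        have hb0 := val_lt h (show 0 < n by omega)
        have : ((n - 1 : ℕ) : ℤ) = (n : ℤ) - 1 := by omega
        omega
      have hrk : ∀ k, k < n → (val h k).toNat = n - 1 - k := by
        intro k hk
        have := formula k hk
        omega
      left
      refine ⟨n - 2 - i, by omega, by omega, -ε, ?_, ?_⟩
      · rcases hε with rfl | rfl
        · right; norm_num
        · left; norm_num
      · have key2 : ∀ k, k < n → val g k = val (g * h) (n - 1 - k) := by
          intro k hk
          rw [val_mul g h (show n - 1 - k < n by omega), hrk (n - 1 - k) (by omega)]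
          congr 1
          omega
        intro k hk
        rw [key2 k hk, key2 0 (by omega)]
        rw [hf (n - 1 - k) (by omega), hf (n - 1 - 0) (by omega)]
        rcases hε with rfl | rfl <;> split_ifs <;> push_cast <;> omega

lemma exists_t (j : ℕ) (hj : j + 1 < n) :
    ∃ t : Function.End (Fin n), Kcl n j t := by
  refine ⟨fun x => ⟨(x : ℕ) - (if j < (x : ℕ) then 1 else 0), by
    have := x.isLt; split_ifs <;> omega⟩, j, Or.inl rfl, hj, 1, Or.inl rfl, ?_⟩
  intro k hk
  unfold val
  rw [dif_pos hk, dif_pos (show 0 < n by omega)]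
  simp only [Fin.val_mk]
  split_ifs with h1 h2 <;> push_cast <;> omega

end PathAux


/-- Any generating set of `wEnd P_n` contains at least `⌊n/2⌋` transformations lying in
`wEnd P_n \ End P_n` and having no inversions. -/
theorem gen_set_wEnd_no_inversions (n : ℕ) (C : Set (Function.End (Fin n)))
    (hC : (Submonoid.closure C : Set (Function.End (Fin n))) = {f | IsWEndo f}) :
    n / 2 ≤ {f ∈ C | IsWEndo f ∧ ¬ IsEndo f ∧ (InvSet f).ncard = 0}.ncard := by
  classical
  have hCw : ∀ c ∈ C, IsWEndo c := by
    intro c hc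
    have h1 : c ∈ (Submonoid.closure C : Set (Function.End (Fin n))) :=
      Submonoid.subset_closure hc
    rw [hC] at h1
    exact h1
  have hmem : ∀ f : Function.End (Fin n), IsWEndo f → f ∈ Submonoid.closure C := by
    intro f hf
    have : f ∈ ({f | IsWEndo f} : Set (Function.End (Fin n))) := hf
    rwa [← hC] at this
  have hexists : ∀ j, j < n / 2 → ∃ c ∈ C, PathAux.Kcl n j c := by
    intro j hj
    have hjn : j + 1 < n := by omega
    obtain ⟨t, htK⟩ := PathAux.exists_t j hjn
    have main : ∀ x, x ∈ Submonoid.closure C →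
        IsWEndo x ∧ (PathAux.Kcl n j x → ∃ c ∈ C, PathAux.Kcl n j c) := by
      intro x hx
      induction hx using Submonoid.closure_induction with
      | mem c hc => exact ⟨hCw c hc, fun hK => ⟨c, hc, hK⟩⟩
      | one =>
        refine ⟨PathAux.wendo_of_val ?_, fun hK => absurd hK (fun h => h.one_false)⟩
        intro k hk
        rw [PathAux.val_one (show k < n by omega), PathAux.val_one hk, abs_le]
        constructor <;> push_cast <;> omega
      | mul x y hx hy ihx ihy =>
        refine ⟨PathAux.mul_wendo ihx.1 ihy.1, fun hK => ?_⟩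
        rcases PathAux.key ihx.1 ihy.1 hK with h | h
        · exact ihx.2 h
        · exact ihy.2 h
    exact (main t (hmem t htK.isWEndo)).2 htK
  choose φ hφC hφK using fun j : Fin (n / 2) => hexists j j.isLt
  have hinj : Function.Injective φ := by
    intro a b hab
    have h1 := hφK a
    have h2 := hφK b
    rw [hab] at h1
    exact Fin.ext (PathAux.Kcl.j_unique a.isLt b.isLt h1 h2)
  have hsub : Set.range φ ⊆ {f ∈ C | IsWEndo f ∧ ¬ IsEndo f ∧ (InvSet f).ncard = 0} := by
    rintro _ ⟨a, rfl⟩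
    refine ⟨hφC a, (hφK a).isWEndo, (hφK a).not_endo, ?_⟩
    rw [(hφK a).invset, Set.ncard_empty]
  haveI : Finite (Function.End (Fin n)) := inferInstanceAs (Finite (Fin n → Fin n))
  have h1 : (Set.range φ).ncard = n / 2 := by
    rw [← Set.image_univ, Set.ncard_image_of_injective _ hinj, Set.ncard_univ,
      Nat.card_eq_fintype_card, Fintype.card_fin]
  rw [← h1]
  exact Set.ncard_le_ncard hsub (Set.toFinite _)
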